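/- Let G be a topological group acting continuously on a locally compact Hausdorff space X. Let x ∈ X and let K ⊆ G be a compact subset such that K ∩ G_x = ∅, where G_x = {g ∈ G : g·x = x} is the stabilizer of x. Then there exists an open neighbourhood α of x such that gα ∩ α = ∅ for all g ∈ K. -/

import Mathlib

open Pointwise

/-- Let a topological group `G` act continuously on a locally compact
Hausdorff space `X`. If `x ∈ X` and `K ⊆ G` is a compact subset disjoint from the
stabilizer of `x`, then there is an open neighbourhood `α` of `x` with `gα ∩ α = ∅`
for all `g ∈ K`. -/
theorem stmt_2 {G X : Type*} [Group G] [TopologicalSpace G] [IsTopologicalGroup G]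
    [TopologicalSpace X] [LocallyCompactSpace X] [T2Space X]
    [MulAction G X] [ContinuousSMul G X]
    (x : X) (K : Set G) (hK : IsCompact K)
    (hKGx : ∀ g ∈ K, g • x ≠ x) :
    ∃ α : Set X, IsOpen α ∧ x ∈ α ∧ ∀ g ∈ K, (g • α) ∩ α = ∅ := by
  have key : ∀ g ∈ K, ∃ (W : Set G) (V : Set X), IsOpen W ∧ g ∈ W ∧ IsOpen V ∧ x ∈ V ∧
      ∀ h ∈ W, (h • V) ∩ V = ∅ := by
    intro g hg
    obtain ⟨A, B, hA, hB, hgxA, hxB, hAB⟩ := t2_separation (hKGx g hg)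
    have hc : Continuous fun p : G × X => p.1 • p.2 := continuous_smul
    have hpre : (fun p : G × X => p.1 • p.2) ⁻¹' A ∈ nhds (g, x) :=
      hc.continuousAt.preimage_mem_nhds (hA.mem_nhds hgxA)
    rw [mem_nhds_prod_iff'] at hpre
    obtain ⟨W, V, hW, hgW, hV, hxV, hWV⟩ := hpre
    refine ⟨W, V ∩ B, hW, hgW, hV.inter hB, ⟨hxV, hxB⟩, ?_⟩
    intro h hh
    apply Set.eq_empty_of_forall_notMem
    rintro y ⟨⟨z, ⟨hzV, _⟩, rfl⟩, _, hyB⟩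
    have hmem : h • z ∈ A := hWV (Set.mk_mem_prod hh hzV)
    exact hAB.le_bot ⟨hmem, hyB⟩
  choose W V hWo hgW hVo hxV hdisj using key
  obtain ⟨t, ht⟩ := hK.elim_nhds_subcover' (fun g hg => W g hg)
    (fun g hg => (hWo g hg).mem_nhds (hgW g hg))
  refine ⟨⋂ i ∈ t, V i i.2, isOpen_biInter_finset (fun i _ => hVo i i.2),
    Set.mem_iInter₂.mpr (fun i _ => hxV i i.2), ?_⟩
  intro g hg
  obtain ⟨i, hit, hgW'⟩ := Set.mem_iUnion₂.mp (ht hg)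
  have hsub : (⋂ i ∈ t, V i i.2) ⊆ V i i.2 := Set.biInter_subset_of_mem hit
  have : (g • ⋂ i ∈ t, V i i.2) ∩ ⋂ i ∈ t, V i i.2 ⊆ (g • V i i.2) ∩ V i i.2 :=
    Set.inter_subset_inter (Set.smul_set_mono hsub) hsub
  rw [hdisj i i.2 g hgW'] at this
  exact Set.subset_empty_iff.mp this
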